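/- Let g ≥ 2 and c ≥ 2 be real (c real, g a natural number). The minimum of Σ_{1≤j<l≤g} a_j a_l over all g-tuples (a_1,…,a_g) of real numbers with a_1 ≥ 1, a_2 ≥ 1, a_3,…,a_g ≥ 0 and Σ_{j=1}^g a_j = c equals c − 1, and it is attained exactly at the two tuples (1, c−1, 0, …, 0) and (c−1, 1, 0, …, 0). -/

import Mathlib

open Finset

/-- Square of a sum in terms of sum of squares plus twice the pairwise products. -/
lemma sq_sum_identity {n : ℕ} (a : Fin n → ℝ) :
    (∑ j, a j) ^ 2 =
      ∑ j, (a j) ^ 2 + 2 * ∑ j, ∑ l ∈ Finset.univ.filter (fun l => j < l), a j * a l := by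
  have hswap : (∑ j : Fin n, ∑ l ∈ Finset.univ.filter (fun l => l < j), a j * a l)
      = ∑ l : Fin n, ∑ j ∈ Finset.univ.filter (fun j => l < j), a j * a l :=
    Finset.sum_comm' (by intro x y; simp)
  have hsplit : ∀ j : Fin n, (∑ l : Fin n, a j * a l)
      = a j ^ 2 + ((∑ l ∈ Finset.univ.filter (fun l => l < j), a j * a l)
        + ∑ l ∈ Finset.univ.filter (fun l => j < l), a j * a l) := by
    intro j
    have hnot : Finset.univ.filter (fun l : Fin n => ¬ l < j)
        = insert j (Finset.univ.filter (fun l : Fin n => j < l)) := by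
      ext l
      simp only [Finset.mem_filter, Finset.mem_univ, true_and, Finset.mem_insert,
        not_lt, Fin.le_def, Fin.lt_def, Fin.ext_iff]
      omega
    rw [← Finset.sum_filter_add_sum_filter_not Finset.univ (fun l : Fin n => l < j)
        (fun l => a j * a l), hnot, Finset.sum_insert (by simp)]
    ring
  calc (∑ j, a j) ^ 2 = ∑ j : Fin n, ∑ l : Fin n, a j * a l := by
        rw [sq, Finset.sum_mul_sum]
    _ = ∑ j, (a j ^ 2 + ((∑ l ∈ Finset.univ.filter (fun l => l < j), a j * a l)
          + ∑ l ∈ Finset.univ.filter (fun l => j < l), a j * a l)) :=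
        Finset.sum_congr rfl fun j _ => hsplit j
    _ = ∑ j, (a j) ^ 2 + ((∑ j : Fin n, ∑ l ∈ Finset.univ.filter (fun l => l < j), a j * a l)
          + ∑ j : Fin n, ∑ l ∈ Finset.univ.filter (fun l => j < l), a j * a l) := by
        rw [Finset.sum_add_distrib, Finset.sum_add_distrib]
    _ = _ := by
        rw [hswap]
        have : (∑ l : Fin n, ∑ j ∈ Finset.univ.filter (fun j => l < j), a j * a l)
            = ∑ j : Fin n, ∑ l ∈ Finset.univ.filter (fun l => j < l), a j * a l := by
          refine Finset.sum_congr rfl fun l _ => Finset.sum_congr rfl fun j _ => mul_comm _ _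
        rw [this]; ring

/-- Splitting a sum over `Fin g` into the first two terms and the rest. -/
lemma split2 {g : ℕ} (hg : 2 ≤ g) (f : Fin g → ℝ) :
    ∑ j, f j = f ⟨0, lt_of_lt_of_le (by norm_num) hg⟩ + f ⟨1, lt_of_lt_of_le (by norm_num) hg⟩ +
      ∑ j ∈ Finset.univ.filter (fun j : Fin g => 2 ≤ (j : ℕ)), f j := by
  classical
  have hpair : Finset.univ.filter (fun j : Fin g => ¬ 2 ≤ (j : ℕ)) =
      ({⟨0, lt_of_lt_of_le (by norm_num) hg⟩, ⟨1, lt_of_lt_of_le (by norm_num) hg⟩} : Finset (Fin g)) := by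
    ext j
    simp only [Finset.mem_filter, Finset.mem_univ, true_and, Finset.mem_insert,
      Finset.mem_singleton, Fin.ext_iff]
    omega
  have h := Finset.sum_filter_add_sum_filter_not Finset.univ (fun j : Fin g => 2 ≤ (j : ℕ)) f
  rw [hpair, Finset.sum_pair
    (by simp [Fin.ext_iff] : (⟨0, lt_of_lt_of_le (by norm_num) hg⟩ : Fin g) ≠ ⟨1, lt_of_lt_of_le (by norm_num) hg⟩)] at h
  linarith [h]

/-- Sum of the special tuple. -/
lemma sum_special {g : ℕ} (hg : 2 ≤ g) (p q : ℝ) :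
    ∑ j : Fin g, (if (j : ℕ) = 0 then p else if (j : ℕ) = 1 then q else 0) = p + q := by
  rw [split2 hg (fun j : Fin g => if (j : ℕ) = 0 then p else if (j : ℕ) = 1 then q else 0),
    Finset.sum_eq_zero (fun j hj => by
      simp only [Finset.mem_filter, Finset.mem_univ, true_and] at hj
      rw [if_neg (by omega), if_neg (by omega)])]
  norm_num

/-- Sum of squares of the special tuple. -/
lemma sum_special_sq {g : ℕ} (hg : 2 ≤ g) (p q : ℝ) :
    ∑ j : Fin g, (if (j : ℕ) = 0 then p else if (j : ℕ) = 1 then q else 0) ^ 2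
      = p ^ 2 + q ^ 2 := by
  rw [split2 hg (fun j : Fin g => (if (j : ℕ) = 0 then p else if (j : ℕ) = 1 then q else 0) ^ 2),
    Finset.sum_eq_zero (fun j hj => by
      simp only [Finset.mem_filter, Finset.mem_univ, true_and] at hj
      rw [if_neg (by omega), if_neg (by omega)]
      norm_num)]
  norm_num

/-- Value of the objective at the special tuple. -/
lemma spec_S {g : ℕ} (hg : 2 ≤ g) (p q : ℝ) :
    (∑ j : Fin g, ∑ l ∈ Finset.univ.filter (fun l => j < l),
      (if (j : ℕ) = 0 then p else if (j : ℕ) = 1 then q else 0) *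
      (if (l : ℕ) = 0 then p else if (l : ℕ) = 1 then q else 0)) = p * q := by
  have h := sq_sum_identity
    (fun j : Fin g => if (j : ℕ) = 0 then p else if (j : ℕ) = 1 then q else 0)
  rw [sum_special hg p q, sum_special_sq hg p q] at h
  nlinarith [h]

/-- Lower bound part. -/
lemma min_lower {g : ℕ} (hg : 2 ≤ g) (c : ℝ) (a : Fin g → ℝ)
    (h0 : 1 ≤ a ⟨0, lt_of_lt_of_le (by norm_num) hg⟩) (h1 : 1 ≤ a ⟨1, lt_of_lt_of_le (by norm_num) hg⟩)
    (h2 : ∀ j : Fin g, 2 ≤ (j : ℕ) → 0 ≤ a j) (hsum : ∑ j, a j = c) :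
    c - 1 ≤ ∑ j, ∑ l ∈ Finset.univ.filter (fun l => j < l), a j * a l := by
  set x := a ⟨0, lt_of_lt_of_le (by norm_num) hg⟩ with hx
  set y := a ⟨1, lt_of_lt_of_le (by norm_num) hg⟩ with hy
  set T := ∑ j ∈ Finset.univ.filter (fun j : Fin g => 2 ≤ (j : ℕ)), a j with hT
  have hTnn : ∀ j ∈ Finset.univ.filter (fun j : Fin g => 2 ≤ (j : ℕ)), 0 ≤ a j := by
    intro j hj
    simp only [Finset.mem_filter, Finset.mem_univ, true_and] at hj
    exact h2 j hj
  have hT0 : 0 ≤ T := Finset.sum_nonneg hTnn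
  have hsum' : x + y + T = c := by rw [← hsum, split2 hg a]
  have hQ : ∑ j, (a j) ^ 2 = x ^ 2 + y ^ 2 +
      ∑ j ∈ Finset.univ.filter (fun j : Fin g => 2 ≤ (j : ℕ)), (a j) ^ 2 :=
    split2 hg (fun j => (a j) ^ 2)
  have hTsq : ∑ j ∈ Finset.univ.filter (fun j : Fin g => 2 ≤ (j : ℕ)), (a j) ^ 2 ≤ T ^ 2 :=
    Finset.sum_sq_le_sq_sum_of_nonneg hTnn
  have hid := sq_sum_identity a
  rw [hsum, hQ] at hid
  have hc2 : c ^ 2 = (x + y + T) ^ 2 := by rw [hsum']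
  have hxy1 : 0 ≤ (x - 1) * (y - 1) := mul_nonneg (by linarith) (by linarith)
  have hxT : 0 ≤ (x - 1) * T := mul_nonneg (by linarith) hT0
  have hyT : 0 ≤ (y - 1) * T := mul_nonneg (by linarith) hT0
  nlinarith [hid, hc2, hTsq, hxy1, hxT, hyT, hT0, hsum']

/-- Equality case analysis. -/
lemma min_eq_case {g : ℕ} (hg : 2 ≤ g) (c : ℝ) (a : Fin g → ℝ)
    (h0 : 1 ≤ a ⟨0, lt_of_lt_of_le (by norm_num) hg⟩) (h1 : 1 ≤ a ⟨1, lt_of_lt_of_le (by norm_num) hg⟩)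
    (h2 : ∀ j : Fin g, 2 ≤ (j : ℕ) → 0 ≤ a j) (hsum : ∑ j, a j = c)
    (hSeq : (∑ j, ∑ l ∈ Finset.univ.filter (fun l => j < l), a j * a l) = c - 1) :
    (a ⟨0, lt_of_lt_of_le (by norm_num) hg⟩ = 1 ∨ a ⟨1, lt_of_lt_of_le (by norm_num) hg⟩ = 1) ∧
      a ⟨0, lt_of_lt_of_le (by norm_num) hg⟩ + a ⟨1, lt_of_lt_of_le (by norm_num) hg⟩ = c ∧
      ∀ j : Fin g, 2 ≤ (j : ℕ) → a j = 0 := by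
  set x := a ⟨0, lt_of_lt_of_le (by norm_num) hg⟩ with hx
  set y := a ⟨1, lt_of_lt_of_le (by norm_num) hg⟩ with hy
  set T := ∑ j ∈ Finset.univ.filter (fun j : Fin g => 2 ≤ (j : ℕ)), a j with hT
  have hTnn : ∀ j ∈ Finset.univ.filter (fun j : Fin g => 2 ≤ (j : ℕ)), 0 ≤ a j := by
    intro j hj
    simp only [Finset.mem_filter, Finset.mem_univ, true_and] at hj
    exact h2 j hj
  have hT0 : 0 ≤ T := Finset.sum_nonneg hTnn
  have hsum' : x + y + T = c := by rw [← hsum, split2 hg a]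
  have hQ : ∑ j, (a j) ^ 2 = x ^ 2 + y ^ 2 +
      ∑ j ∈ Finset.univ.filter (fun j : Fin g => 2 ≤ (j : ℕ)), (a j) ^ 2 :=
    split2 hg (fun j => (a j) ^ 2)
  have hTsq : ∑ j ∈ Finset.univ.filter (fun j : Fin g => 2 ≤ (j : ℕ)), (a j) ^ 2 ≤ T ^ 2 :=
    Finset.sum_sq_le_sq_sum_of_nonneg hTnn
  have hid := sq_sum_identity a
  rw [hsum, hQ, hSeq] at hid
  have hc2 : c ^ 2 = (x + y + T) ^ 2 := by rw [hsum']
  have hxy1 : 0 ≤ (x - 1) * (y - 1) := mul_nonneg (by linarith) (by linarith)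
  have hxT : 0 ≤ (x - 1) * T := mul_nonneg (by linarith) hT0
  have hyT : 0 ≤ (y - 1) * T := mul_nonneg (by linarith) hT0
  have hTz : T = 0 := by nlinarith [hid, hc2, hTsq, hxy1, hxT, hyT, hT0]
  have htail : ∀ j : Fin g, 2 ≤ (j : ℕ) → a j = 0 := by
    intro j hj
    exact (Finset.sum_eq_zero_iff_of_nonneg hTnn).mp hTz j (by simp [hj])
  have hRz : ∑ j ∈ Finset.univ.filter (fun j : Fin g => 2 ≤ (j : ℕ)), (a j) ^ 2 = 0 :=
    Finset.sum_eq_zero fun j hj => by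
      rw [htail j (by simpa using hj)]; ring
  rw [hRz] at hid
  have hxyprod : (x - 1) * (y - 1) = 0 := by nlinarith [hid, hc2, hTz]
  refine ⟨?_, by linarith, htail⟩
  rcases mul_eq_zero.mp hxyprod with h | h
  · exact Or.inl (by linarith)
  · exact Or.inr (by linarith)

theorem min_sum_pairwise_products {g : ℕ} (hg : 2 ≤ g) (c : ℝ) (hc : 2 ≤ c) :
    IsLeast {s : ℝ | ∃ a : Fin g → ℝ,
        (1 ≤ a ⟨0, by omega⟩ ∧ 1 ≤ a ⟨1, by omega⟩ ∧
          (∀ j : Fin g, 2 ≤ (j : ℕ) → 0 ≤ a j) ∧ ∑ j, a j = c) ∧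
        s = ∑ j, ∑ l ∈ Finset.univ.filter (fun l => j < l), a j * a l}
      (c - 1) ∧
    ∀ a : Fin g → ℝ,
      (1 ≤ a ⟨0, by omega⟩ ∧ 1 ≤ a ⟨1, by omega⟩ ∧
        (∀ j : Fin g, 2 ≤ (j : ℕ) → 0 ≤ a j) ∧ ∑ j, a j = c) →
      ((∑ j, ∑ l ∈ Finset.univ.filter (fun l => j < l), a j * a l) = c - 1 ↔
        (a = fun j : Fin g => if (j : ℕ) = 0 then 1 else if (j : ℕ) = 1 then c - 1 else 0) ∨
        (a = fun j : Fin g => if (j : ℕ) = 0 then c - 1 else if (j : ℕ) = 1 then 1 else 0)) := by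
  have hspecC : ∀ p q : ℝ, 1 ≤ p → 1 ≤ q → p + q = c →
      (1 ≤ (fun j : Fin g => if (j : ℕ) = 0 then p else if (j : ℕ) = 1 then q else 0)
          ⟨0, by omega⟩ ∧
       1 ≤ (fun j : Fin g => if (j : ℕ) = 0 then p else if (j : ℕ) = 1 then q else 0)
          ⟨1, by omega⟩ ∧
       (∀ j : Fin g, 2 ≤ (j : ℕ) →
          0 ≤ (fun j : Fin g => if (j : ℕ) = 0 then p else if (j : ℕ) = 1 then q else 0) j) ∧
       ∑ j, (fun j : Fin g => if (j : ℕ) = 0 then p else if (j : ℕ) = 1 then q else 0) j = c) := by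
    intro p q hp hq hpq
    refine ⟨by simpa using hp, by simpa using hq, fun j hj => ?_, ?_⟩
    · simp only [if_neg (by omega : ¬ (j : ℕ) = 0), if_neg (by omega : ¬ (j : ℕ) = 1)]
      exact le_refl 0
    · show ∑ j : Fin g, (if (j : ℕ) = 0 then p else if (j : ℕ) = 1 then q else 0) = c
      rw [sum_special hg p q]; exact hpq
  have hspecS : ∀ p q : ℝ,
      (∑ j : Fin g, ∑ l ∈ Finset.univ.filter (fun l => j < l),
        (fun j : Fin g => if (j : ℕ) = 0 then p else if (j : ℕ) = 1 then q else 0) j *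
        (fun j : Fin g => if (j : ℕ) = 0 then p else if (j : ℕ) = 1 then q else 0) l)
        = p * q := fun p q => spec_S hg p q
  constructor
  · constructor
    · exact ⟨fun j : Fin g => if (j : ℕ) = 0 then 1 else if (j : ℕ) = 1 then c - 1 else 0,
        hspecC 1 (c - 1) le_rfl (by linarith) (by ring),
        by rw [hspecS 1 (c - 1)]; ring⟩
    · rintro s ⟨a, ⟨h0, h1, h2, hsum⟩, rfl⟩
      exact min_lower hg c a h0 h1 h2 hsum
  · intro a ⟨h0, h1, h2, hsum⟩
    constructor
    · intro hSeq
      obtain ⟨hor, hxyc, htail⟩ := min_eq_case hg c a h0 h1 h2 hsum hSeq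
      rcases hor with h | h
      · left
        funext j
        by_cases hj0 : (j : ℕ) = 0
        · have hj : j = ⟨0, by omega⟩ := Fin.ext hj0
          rw [hj]; simpa using h
        · by_cases hj1 : (j : ℕ) = 1
          · have hj : j = ⟨1, by omega⟩ := Fin.ext hj1
            rw [hj]; simp; linarith
          · simp only [if_neg hj0, if_neg hj1]
            exact htail j (by omega)
      · right
        funext j
        by_cases hj0 : (j : ℕ) = 0
        · have hj : j = ⟨0, by omega⟩ := Fin.ext hj0
          rw [hj]; simp; linarith
        · by_cases hj1 : (j : ℕ) = 1
          · have hj : j = ⟨1, by omega⟩ := Fin.ext hj1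
            rw [hj]; simpa using h
          · simp only [if_neg hj0, if_neg hj1]
            exact htail j (by omega)
    · rintro (rfl | rfl)
      · rw [hspecS 1 (c - 1)]; ring
      · rw [hspecS (c - 1) 1]; ring
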